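/- arXiv:2011.07195 — 3 statements merged into one kernel-verified Lean document; each statement's English description precedes it below -/
import Mathlib

section
/- As M tends to infinity, the probability that the photon reaches detector D₀ in the blocked tandem interferometer, namely (cos(π/(2M)))^(2M), tends to 1; i.e., lim_{M→∞} (cos(π/(2M)))^(2M) = 1. -/
open Real Filter

/-- As `M → ∞`, the blocked-case detection probability
`(cos (π/(2M)))^(2M)` tends to `1`. -/
theorem blocked_detection_prob_tendsto_one :
    Tendsto (fun M : ℕ => (Real.cos (π / (2 * M))) ^ (2 * M)) atTop (nhds 1) := by
  have key : Tendsto (fun M : ℕ => (2 * M : ℝ) * Real.log (Real.cos (π / (2 * M))))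
      atTop (nhds 0) := by
    apply tendsto_of_tendsto_of_tendsto_of_le_of_le'
      (g := fun M : ℕ => -(π ^ 2) / M) (h := fun _ => (0 : ℝ))
    · have := tendsto_const_div_atTop_nhds_zero_nat (-(π ^ 2))
      simpa using this
    · exact tendsto_const_nhds
    · filter_upwards [eventually_ge_atTop 4] with M hM
      have hM4 : (4 : ℝ) ≤ M := by exact_mod_cast hM
      have hMpos : (0 : ℝ) < M := by linarith
      set x := π / (2 * M) with hx
      have hxpos : 0 < x := by positivity
      have hx1 : x ≤ 1 := by
        rw [hx, div_le_one (by positivity)]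
        nlinarith [Real.pi_le_four]
      have hcos : 1 - x ^ 2 / 2 ≤ Real.cos x := Real.one_sub_sq_div_two_le_cos
      have hcos_half : (1 : ℝ) / 2 ≤ Real.cos x := by nlinarith
      have hcpos : 0 < Real.cos x := by linarith
      have hlog : 1 - (Real.cos x)⁻¹ ≤ Real.log (Real.cos x) :=
        Real.one_sub_inv_le_log_of_pos hcpos
      -- 1 - 1/c = -(1-c)/c ≥ -2(1-c) ≥ -x²
      have h1 : 1 - (Real.cos x)⁻¹ = -((1 - Real.cos x) / Real.cos x) := by
        field_simp
        ring
      have h2 : (1 - Real.cos x) / Real.cos x ≤ 2 * (1 - Real.cos x) := by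
        rw [div_le_iff₀ hcpos]
        nlinarith [Real.cos_le_one x]
      have h3 : 1 - Real.cos x ≤ x ^ 2 / 2 := by linarith
      have hlog2 : -(x ^ 2) ≤ Real.log (Real.cos x) := by
        rw [h1] at hlog; nlinarith
      have hxval : x ^ 2 = π ^ 2 / (4 * M ^ 2) := by
        rw [hx]; field_simp; ring
      have heq : (2 * (M:ℝ)) * (-(x ^ 2)) = -(π ^ 2) / (2 * M) := by
        rw [hxval]; field_simp; ring
      calc -(π ^ 2) / M ≤ (2 * M) * (-(x ^ 2)) := by
            rw [heq, div_le_div_iff₀ hMpos (by positivity)]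
            nlinarith [Real.pi_pos]
        _ ≤ (2 * M) * Real.log (Real.cos x) := by
            apply mul_le_mul_of_nonneg_left hlog2 (by positivity)
    · filter_upwards [eventually_ge_atTop 4] with M hM
      have hM4 : (4 : ℝ) ≤ M := by exact_mod_cast hM
      have hc1 : Real.cos (π / (2 * M)) ≤ 1 := Real.cos_le_one _
      have hMpos : (0:ℝ) < M := by linarith
      have hxlt : π / (2 * (M:ℝ)) < π / 2 := by
        apply div_lt_div_of_pos_left Real.pi_pos (by norm_num) (by linarith)
      have hxpos : 0 < π / (2 * (M:ℝ)) := div_pos Real.pi_pos (by linarith)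
      have hcpos : 0 < Real.cos (π / (2 * M)) :=
        Real.cos_pos_of_mem_Ioo ⟨by linarith, hxlt⟩
      have hlog : Real.log (Real.cos (π / (2 * M))) ≤ 0 :=
        Real.log_nonpos hcpos.le hc1
      have : (0:ℝ) ≤ 2 * M := by positivity
      nlinarith
  have hexp : Tendsto (fun M : ℕ =>
      Real.exp ((2 * M : ℝ) * Real.log (Real.cos (π / (2 * M))))) atTop (nhds 1) := by
    simpa [Function.comp_def] using (Real.continuous_exp.tendsto 0).comp key
  apply hexp.congr'
  filter_upwards [eventually_ge_atTop 4] with M hM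
  have hM4 : (4 : ℝ) ≤ M := by exact_mod_cast hM
  have hMpos : (0 : ℝ) < M := by linarith
  have hxpos : 0 < π / (2 * M) := by positivity
  have hxlt : π / (2 * M) < π / 2 := by
    apply div_lt_div_of_pos_left Real.pi_pos (by norm_num) (by linarith)
  have hcpos : 0 < Real.cos (π / (2 * M)) :=
    Real.cos_pos_of_mem_Ioo ⟨by linarith, hxlt⟩
  rw [mul_comm, Real.exp_mul, Real.exp_log hcpos, ← Real.rpow_natCast]
  norm_num
end

section
/- For every natural number M ≥ 1, the blocked-case detection probability satisfies (cos(π/(2M)))^(2M) ≥ 1 − π²/(4M). -/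
open Real

/-- For every `M ≥ 1`, the blocked-case detection probability satisfies
`(cos (π/(2M)))^(2M) ≥ 1 − π²/(4M)`. -/
theorem blocked_detection_prob_lower_bound (M : ℕ) (hM : 1 ≤ M) :
    (Real.cos (π / (2 * M))) ^ (2 * M) ≥ 1 - π ^ 2 / (4 * M) := by
  rcases eq_or_lt_of_le hM with h1 | h2
  · -- M = 1
    subst h1
    have : π / (2 * (1 : ℕ)) = π / 2 := by norm_num
    rw [this, Real.cos_pi_div_two]
    have hpi : (3 : ℝ) ≤ π := by linarith [Real.pi_gt_three]
    have : (1 : ℝ) - π ^ 2 / (4 * (1 : ℕ)) ≤ 0 := by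
      push_cast
      nlinarith
    simpa using this
  · -- M ≥ 2
    have hM2 : (2 : ℝ) ≤ (M : ℝ) := by exact_mod_cast h2
    have hMpos : (0 : ℝ) < M := by linarith
    set x : ℝ := π / (2 * M) with hx
    set t : ℝ := x ^ 2 / 2 with ht
    have hpi : (3 : ℝ) ≤ π ∧ π ≤ 3.15 := ⟨by linarith [Real.pi_gt_three], by
      linarith [Real.pi_lt_d2]⟩
    have hxpos : 0 < x := by
      apply div_pos Real.pi_pos; linarith
    have hxle : x ≤ π / 4 := by
      rw [hx]
      apply div_le_div_of_nonneg_left Real.pi_pos.le (by linarith)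
      linarith
    have htle : t ≤ 1 := by
      have : x ≤ 1 := by
        have : π / 4 ≤ 1 := by linarith [hpi.2]
        linarith
      rw [ht]; nlinarith
    have hcos : 1 - t ≤ Real.cos x := by
      rw [ht]; exact Real.one_sub_sq_div_two_le_cos
    have h0 : (0 : ℝ) ≤ 1 - t := by linarith
    have hpow : (1 - t) ^ (2 * M) ≤ (Real.cos x) ^ (2 * M) :=
      pow_le_pow_left₀ h0 hcos _
    have hbern : 1 + (2 * M : ℕ) * (-t) ≤ (1 + (-t)) ^ (2 * M) := by
      apply one_add_mul_le_pow
      linarith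
    have key : π ^ 2 / (4 * M) = (2 * M : ℕ) * t := by
      rw [ht, hx]
      push_cast
      field_simp
      ring
    have : 1 - π ^ 2 / (4 * M) ≤ (1 - t) ^ (2 * M) := by
      rw [key]
      have : (1 : ℝ) + (2 * M : ℕ) * (-t) = 1 - (2 * M : ℕ) * t := by ring
      rw [this] at hbern
      simpa [← sub_eq_add_neg] using hbern
    linarith
end

section
/- Let C_g, C_e be complex numbers, and for each natural number M ≥ 1 set β₁ = π/(2M) and define the vector v_M in ℂ² ⊗ ℂ² (photon ⊗ atom) by v_M = C_g·(cos(Mβ₁)·|H⟩ + sin(Mβ₁)·|V⟩) ⊗ |g⟩ + C_e·(cos^M(β₁)·|H⟩ + cos^{M−1}(β₁)·sin(β₁)·|V⟩) ⊗ |e⟩. Then v_M converges to C_g·|V⟩⊗|g⟩ + C_e·|H⟩⊗|e⟩ as M → ∞. Hence the counterfactual special CNOT gate realizes the transformation (C_g|g⟩ + C_e|e⟩)|H⟩ → C_g|g⟩|V⟩ + C_e|e⟩|H⟩ in the limit of infinitely many cycles. -/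
open Real Filter

/-- Basis vector of the photon ⊗ atom space `ℂ² ⊗ ℂ²`:
`ket p a` is `|p⟩ ⊗ |a⟩`, with photon index `0 = |H⟩`, `1 = |V⟩`
and atom index `0 = |g⟩`, `1 = |e⟩`. -/
noncomputable def ket (p a : Fin 2) : EuclideanSpace ℂ (Fin 2 × Fin 2) :=
  EuclideanSpace.single (p, a) 1

/-- The joint photon–atom state after the `M`-th polarizing beam splitter,
with `β₁ = π/(2M)`:
`v_M = C_g (cos(Mβ₁)|H⟩ + sin(Mβ₁)|V⟩)|g⟩
      + C_e (cos^M(β₁)|H⟩ + cos^{M−1}(β₁) sin(β₁)|V⟩)|e⟩`. -/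
noncomputable def vM (Cg Ce : ℂ) (M : ℕ) : EuclideanSpace ℂ (Fin 2 × Fin 2) :=
  (Cg * (Real.cos (M * (π / (2 * M))) : ℂ)) • ket 0 0
    + (Cg * (Real.sin (M * (π / (2 * M))) : ℂ)) • ket 1 0
    + (Ce * ((Real.cos (π / (2 * M))) ^ M : ℝ)) • ket 0 1
    + (Ce * (((Real.cos (π / (2 * M))) ^ (M - 1) * Real.sin (π / (2 * M))) : ℝ)) • ket 1 1

lemma angle_pos {M : ℕ} (hM : 1 ≤ M) : 0 < π / (2 * M) := by
  apply div_pos Real.pi_pos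
  positivity

lemma angle_le {M : ℕ} (hM : 1 ≤ M) : π / (2 * M) ≤ π / 2 := by
  apply div_le_div_of_nonneg_left Real.pi_pos.le (by norm_num)
  have : (1 : ℝ) ≤ M := by exact_mod_cast hM
  linarith

lemma cos_nonneg_angle {M : ℕ} (hM : 1 ≤ M) : 0 ≤ Real.cos (π / (2 * M)) :=
  Real.cos_nonneg_of_mem_Icc ⟨by linarith [angle_pos hM, Real.pi_pos], angle_le hM⟩

lemma cosPow_tendsto : Tendsto (fun M : ℕ => (Real.cos (π / (2 * M))) ^ M) atTop (nhds 1) := by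
  have hlow : Tendsto (fun M : ℕ => 1 - π ^ 2 / 8 * (1 / M)) atTop (nhds 1) := by
    have h := tendsto_one_div_atTop_nhds_zero_nat.const_mul (π ^ 2 / 8)
    simpa using (tendsto_const_nhds (x := (1:ℝ)) (f := atTop)).sub h
  refine tendsto_of_tendsto_of_tendsto_of_le_of_le' hlow tendsto_const_nhds ?_ ?_
  · filter_upwards [eventually_ge_atTop 2] with M hM
    have hM1 : 1 ≤ M := le_trans (by norm_num) hM
    set t := π / (2 * M) with ht
    have hMpos : (0:ℝ) < M := by exact_mod_cast hM1
    have hM2 : (2:ℝ) ≤ M := by exact_mod_cast hM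
    have ht0 : 0 < t := angle_pos hM1
    have ht4 : t ≤ π / 4 := by
      rw [ht]
      rw [div_le_div_iff₀ (by positivity) (by norm_num)]
      nlinarith [Real.pi_pos]
    have hπ4 : π ≤ 4 := Real.pi_le_four
    have htle : t ≤ 1 := by linarith
    have hcos : 1 - t ^ 2 / 2 ≤ Real.cos t := Real.one_sub_sq_div_two_le_cos
    have hbase : (0:ℝ) ≤ 1 - t ^ 2 / 2 := by nlinarith
    have h1 : (1 - t ^ 2 / 2) ^ M ≤ Real.cos t ^ M := pow_le_pow_left₀ hbase hcos M
    have h2 : 1 + (M : ℝ) * (-(t ^ 2 / 2)) ≤ (1 + -(t ^ 2 / 2)) ^ M := by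
      apply one_add_mul_le_pow
      nlinarith
    have hts : (M : ℝ) * (t ^ 2 / 2) = π ^ 2 / 8 * (1 / M) := by
      rw [ht]
      field_simp
      ring
    calc 1 - π ^ 2 / 8 * (1 / M) = 1 + (M : ℝ) * (-(t ^ 2 / 2)) := by rw [← hts]; ring
      _ ≤ (1 + -(t ^ 2 / 2)) ^ M := h2
      _ = (1 - t ^ 2 / 2) ^ M := by ring_nf
      _ ≤ Real.cos t ^ M := h1
  · filter_upwards [eventually_ge_atTop 1] with M hM
    exact pow_le_one₀ (cos_nonneg_angle hM) (Real.cos_le_one _)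

lemma tail_tendsto :
    Tendsto (fun M : ℕ => (Real.cos (π / (2 * M))) ^ (M - 1) * Real.sin (π / (2 * M)))
      atTop (nhds 0) := by
  have hup : Tendsto (fun M : ℕ => π / 2 * (1 / M)) atTop (nhds 0) := by
    simpa using tendsto_one_div_atTop_nhds_zero_nat.const_mul (π / 2)
  refine tendsto_of_tendsto_of_tendsto_of_le_of_le' tendsto_const_nhds hup ?_ ?_
  · filter_upwards [eventually_ge_atTop 1] with M hM
    have h1 : 0 ≤ Real.sin (π / (2 * M)) :=
      Real.sin_nonneg_of_nonneg_of_le_pi (angle_pos hM).le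
        (le_trans (angle_le hM) (by linarith [Real.pi_pos]))
    exact mul_nonneg (pow_nonneg (cos_nonneg_angle hM) _) h1
  · filter_upwards [eventually_ge_atTop 1] with M hM
    have hMpos : (0:ℝ) < M := by exact_mod_cast hM
    have h1 : (Real.cos (π / (2 * M))) ^ (M - 1) ≤ 1 :=
      pow_le_one₀ (cos_nonneg_angle hM) (Real.cos_le_one _)
    have h2 : Real.sin (π / (2 * M)) ≤ π / (2 * M) := Real.sin_le (angle_pos hM).le
    have h3 : 0 ≤ Real.sin (π / (2 * M)) :=
      Real.sin_nonneg_of_nonneg_of_le_pi (angle_pos hM).le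
        (le_trans (angle_le hM) (by linarith [Real.pi_pos]))
    calc (Real.cos (π / (2 * M))) ^ (M - 1) * Real.sin (π / (2 * M))
        ≤ 1 * Real.sin (π / (2 * M)) := mul_le_mul_of_nonneg_right h1 h3
      _ = Real.sin (π / (2 * M)) := one_mul _
      _ ≤ π / (2 * M) := h2
      _ = π / 2 * (1 / M) := by field_simp
      _ ≤ π / 2 * (1 / M) := le_refl _

/-- As `M → ∞`, the output state `v_M` of the counterfactual special CNOT gate
converges to `C_g |V⟩|g⟩ + C_e |H⟩|e⟩`, i.e. the gate realizes
`(C_g|g⟩ + C_e|e⟩)|H⟩ → C_g|g⟩|V⟩ + C_e|e⟩|H⟩` in the limit. -/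
theorem counterfactual_CNOT_limit (Cg Ce : ℂ) :
    Tendsto (fun M : ℕ => vM Cg Ce M) atTop
      (nhds (Cg • ket 1 0 + Ce • ket 0 1)) := by
  have hEq : ∀ᶠ M : ℕ in atTop, vM Cg Ce M =
      Cg • ket 1 0
        + (Ce * ((Real.cos (π / (2 * M))) ^ M : ℝ)) • ket 0 1
        + (Ce * (((Real.cos (π / (2 * M))) ^ (M - 1) * Real.sin (π / (2 * M))) : ℝ)) • ket 1 1 := by
    filter_upwards [eventually_ge_atTop 1] with M hM
    have hMne : (M : ℝ) ≠ 0 := Nat.cast_ne_zero.mpr (by omega)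
    have hang : (M : ℝ) * (π / (2 * M)) = π / 2 := by field_simp
    rw [vM, hang, Real.cos_pi_div_two, Real.sin_pi_div_two]
    simp
  have hsnd : Tendsto (fun M : ℕ =>
      (Ce * ((Real.cos (π / (2 * M))) ^ M : ℝ)) • ket (0:Fin 2) (1:Fin 2)) atTop
      (nhds (Ce • ket 0 1)) := by
    have h1 : Tendsto (fun M : ℕ => (((Real.cos (π / (2 * M))) ^ M : ℝ) : ℂ)) atTop
        (nhds ((1:ℝ) : ℂ)) :=
      (Complex.continuous_ofReal.tendsto _).comp cosPow_tendsto
    have h2 := (h1.const_mul Ce).smul_const (ket (0:Fin 2) (1:Fin 2))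
    simpa using h2
  have hthd : Tendsto (fun M : ℕ =>
      (Ce * (((Real.cos (π / (2 * M))) ^ (M - 1) * Real.sin (π / (2 * M))) : ℝ)) •
        ket (1:Fin 2) (1:Fin 2)) atTop (nhds 0) := by
    have h1 : Tendsto (fun M : ℕ =>
        ((((Real.cos (π / (2 * M))) ^ (M - 1) * Real.sin (π / (2 * M))) : ℝ) : ℂ)) atTop
        (nhds ((0:ℝ) : ℂ)) :=
      (Complex.continuous_ofReal.tendsto _).comp tail_tendsto
    have h2 := (h1.const_mul Ce).smul_const (ket (1:Fin 2) (1:Fin 2))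
    simpa using h2
  have hmain := ((tendsto_const_nhds (x := Cg • ket (1:Fin 2) (0:Fin 2))
      (f := atTop)).add hsnd).add hthd
  rw [add_zero] at hmain
  exact Tendsto.congr' (hEq.mono fun _ h => h.symm) hmain
end
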